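/- Let W be a real m×m matrix and A a real n×n matrix such that the spectral radius of |Aᵀ ⊗ W| is strictly less than 1, let φ : ℝ → ℝ be componentwise non-expansive, and let B be a real m×n matrix. Define X₀ = 0 and X_{t+1} = φ(W X_t A + B) entrywise. Then the sequence (X_t) converges, and its limit X satisfies X = φ(W X A + B). -/

import Mathlib

open Matrix Kronecker Filter
open scoped ENNReal NNReal

/-- The spectral radius of a real square matrix: the supremum of the moduli of its
complex eigenvalues (elements of the spectrum of the matrix viewed over `ℂ`). -/
noncomputable def specRad {ι : Type*} [Fintype ι] [DecidableEq ι]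
    (M : Matrix ι ι ℝ) : ENNReal :=
  spectralRadius ℂ (M.map Complex.ofReal)

section Aux

attribute [local instance] Matrix.linftyOpNormedRing Matrix.linftyOpNormedAlgebra
  Matrix.linftyOpNormedSpace

lemma summable_norm_pow_of_specRad_lt_one {ι : Type*} [Fintype ι] [DecidableEq ι]
    (N : Matrix ι ι ℝ) (h : specRad N < 1) :
    Summable fun t : ℕ => ‖N ^ t‖ := by
  set Nc : Matrix ι ι ℂ := N.map Complex.ofReal with hNc
  have hnorm : ∀ t : ℕ, ‖N ^ t‖₊ = ‖Nc ^ t‖₊ := by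
    intro t
    have hmap : Nc ^ t = (N ^ t).map Complex.ofReal := by
      have := map_pow (Complex.ofRealHom.mapMatrix) N t
      exact this.symm
    rw [hmap, Matrix.linfty_opNNNorm_def, Matrix.linfty_opNNNorm_def]
    simp [Matrix.map_apply]
  obtain ⟨r, hr1, hr2⟩ := ENNReal.lt_iff_exists_nnreal_btwn.mp h
  have hgel := spectrum.pow_nnnorm_pow_one_div_tendsto_nhds_spectralRadius Nc
  have hev : ∀ᶠ k : ℕ in atTop, (‖Nc ^ k‖₊ : ℝ≥0∞) ^ (1 / (k : ℝ)) < (r : ℝ≥0∞) :=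
    hgel.eventually_lt_const hr1
  obtain ⟨K, hK⟩ := hev.exists_forall_of_atTop
  have hbound : ∀ k : ℕ, k ≥ K + 1 → ‖N ^ k‖ ≤ (r : ℝ) ^ k := by
    intro k hk
    have hk0 : (k : ℝ) ≠ 0 := Nat.cast_ne_zero.mpr (by omega)
    have h1 := hK k (le_trans (Nat.le_succ K) hk)
    have h2 : ((‖Nc ^ k‖₊ : ℝ≥0∞) ^ (1 / (k : ℝ))) ^ (k : ℕ) ≤ (r : ℝ≥0∞) ^ (k : ℕ) :=
      pow_le_pow_left₀ (zero_le) h1.le k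
    rw [← ENNReal.rpow_natCast ((‖Nc ^ k‖₊ : ℝ≥0∞) ^ (1 / (k : ℝ))),
      ← ENNReal.rpow_mul, one_div, inv_mul_cancel₀ hk0, ENNReal.rpow_one] at h2
    have h3 : ‖Nc ^ k‖₊ ≤ r ^ k := by
      rw [← ENNReal.coe_pow] at h2
      exact_mod_cast h2
    have h4 : ‖N ^ k‖₊ ≤ r ^ k := by rw [hnorm k]; exact h3
    calc ‖N ^ k‖ = ((‖N ^ k‖₊ : ℝ≥0) : ℝ) := rfl
      _ ≤ ((r ^ k : ℝ≥0) : ℝ) := by exact_mod_cast h4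
      _ = (r : ℝ) ^ k := by push_cast; ring
  have hrlt : (r : ℝ) < 1 := by
    have : (r : ℝ≥0∞) < (1 : ℝ≥0) := by simpa using hr2
    exact_mod_cast this
  have hgeom : Summable fun k : ℕ => (r : ℝ) ^ k :=
    summable_geometric_of_lt_one r.coe_nonneg hrlt
  have hshift : Summable fun i : ℕ => (r : ℝ) ^ (i + (K + 1)) :=
    (summable_nat_add_iff (K + 1)).mpr hgeom
  have : Summable fun i : ℕ => ‖N ^ (i + (K + 1))‖ :=
    Summable.of_nonneg_of_le (fun i => norm_nonneg _)
      (fun i => hbound _ (Nat.le_add_left _ _)) hshift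
  exact (summable_nat_add_iff (K + 1)).mp this

lemma specRad_key {m n : ℕ} (W : Matrix (Fin m) (Fin m) ℝ) (A : Matrix (Fin n) (Fin n) ℝ)
    (hρ : specRad ((Aᵀ ⊗ₖ W).map fun a => |a|) < 1)
    (φ : ℝ → ℝ) (hφ : ∀ a b : ℝ, |φ a - φ b| ≤ |a - b|)
    (B : Matrix (Fin m) (Fin n) ℝ)
    (X : ℕ → Matrix (Fin m) (Fin n) ℝ)
    (hX0 : X 0 = 0)
    (hXs : ∀ t, X (t + 1) = (W * X t * A + B).map φ) :
    ∃ u : ℕ → ℝ, Summable u ∧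
      ∀ t (k : Fin m) (l : Fin n), |X (t + 1) k l - X t k l| ≤ u t := by
  classical
  set N : Matrix (Fin n × Fin m) (Fin n × Fin m) ℝ := (Aᵀ ⊗ₖ W).map fun a => |a| with hN
  set v : Fin n × Fin m → ℝ := fun p => |X 1 p.2 p.1| with hv
  have key : ∀ t (k : Fin m) (l : Fin n),
      |X (t + 1) k l - X t k l| ≤ (N ^ t).mulVec v (l, k) := by
    intro t
    induction t with
    | zero =>
      intro k l
      simp [hX0, hv, Matrix.one_mulVec]
    | succ t ih =>
      intro k l
      have hD : (W * X (t + 1) * A + B) - (W * X t * A + B)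
          = W * (X (t + 1) - X t) * A := by
        rw [Matrix.mul_sub, Matrix.sub_mul]
        abel
      have h1 : |X (t + 1 + 1) k l - X (t + 1) k l|
          ≤ |(W * (X (t + 1) - X t) * A) k l| := by
        have hs : |((W * X (t + 1) * A + B).map φ) k l - ((W * X t * A + B).map φ) k l|
            ≤ |(W * (X (t + 1) - X t) * A) k l| := by
          simp only [Matrix.map_apply]
          refine (hφ _ _).trans ?_
          rw [← hD]
          simp [Matrix.sub_apply]
        rw [← hXs (t + 1), ← hXs t] at hs
        exact hs
      refine h1.trans ?_
      set D := X (t + 1) - X t with hDdef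
      have hentry : (W * D * A) k l = ∑ l' : Fin n, ∑ k' : Fin m,
          W k k' * D k' l' * A l' l := by
        simp [Matrix.mul_apply, Finset.sum_mul]
      rw [hentry]
      have habs : |∑ l' : Fin n, ∑ k' : Fin m, W k k' * D k' l' * A l' l|
          ≤ ∑ l' : Fin n, ∑ k' : Fin m, (|A l' l| * |W k k'|) * |D k' l'| := by
        refine (Finset.abs_sum_le_sum_abs _ _).trans ?_
        refine Finset.sum_le_sum fun l' _ => ?_
        refine (Finset.abs_sum_le_sum_abs _ _).trans ?_
        refine Finset.sum_le_sum fun k' _ => ?_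
        rw [abs_mul, abs_mul]
        ring_nf
        exact le_refl _
      refine habs.trans ?_
      have hstep : ∑ l' : Fin n, ∑ k' : Fin m, (|A l' l| * |W k k'|) * |D k' l'|
          ≤ ∑ l' : Fin n, ∑ k' : Fin m,
            (|A l' l| * |W k k'|) * ((N ^ t).mulVec v (l', k')) := by
        refine Finset.sum_le_sum fun l' _ => Finset.sum_le_sum fun k' _ => ?_
        have := ih k' l'
        have hDval : |D k' l'| = |X (t + 1) k' l' - X t k' l'| := by
          simp [hDdef, Matrix.sub_apply]
        refine mul_le_mul_of_nonneg_left ?_ (by positivity)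
        rw [hDval]; exact this
      refine hstep.trans ?_
      have : (N ^ (t + 1)).mulVec v (l, k)
          = ∑ l' : Fin n, ∑ k' : Fin m,
            (|A l' l| * |W k k'|) * ((N ^ t).mulVec v (l', k')) := by
        rw [pow_succ', ← Matrix.mulVec_mulVec]
        rw [Matrix.mulVec, dotProduct]
        rw [Fintype.sum_prod_type]
        refine Finset.sum_congr rfl fun l' _ => Finset.sum_congr rfl fun k' _ => ?_
        congr 1
        simp [hN, Matrix.map_apply, Matrix.kroneckerMap_apply, Matrix.transpose_apply,
          abs_mul]
      rw [this]
  have hsum : Summable fun t : ℕ => ‖N ^ t‖ :=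
    summable_norm_pow_of_specRad_lt_one N (by simpa [hN] using hρ)
  refine ⟨fun t => ‖N ^ t‖ * ‖v‖, hsum.mul_right _, ?_⟩
  intro t k l
  refine (key t k l).trans ?_
  calc (N ^ t).mulVec v (l, k) ≤ |(N ^ t).mulVec v (l, k)| := le_abs_self _
    _ = ‖(N ^ t).mulVec v (l, k)‖ := rfl
    _ ≤ ‖(N ^ t).mulVec v‖ := norm_le_pi_norm _ _
    _ ≤ ‖N ^ t‖ * ‖v‖ := Matrix.linfty_opNorm_mulVec _ _

end Aux

theorem stmt_4 {m n : ℕ} (W : Matrix (Fin m) (Fin m) ℝ) (A : Matrix (Fin n) (Fin n) ℝ)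
    (hρ : specRad ((Aᵀ ⊗ₖ W).map fun a => |a|) < 1)
    (φ : ℝ → ℝ) (hφ : ∀ a b : ℝ, |φ a - φ b| ≤ |a - b|)
    (B : Matrix (Fin m) (Fin n) ℝ)
    (X : ℕ → Matrix (Fin m) (Fin n) ℝ)
    (hX0 : X 0 = 0)
    (hXs : ∀ t, X (t + 1) = (W * X t * A + B).map φ) :
    ∃ Xl : Matrix (Fin m) (Fin n) ℝ,
      Tendsto X atTop (nhds Xl) ∧ Xl = (W * Xl * A + B).map φ := by
  obtain ⟨u, hu, hbd⟩ := specRad_key W A hρ φ hφ B X hX0 hXs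
  have hC : ∀ (k : Fin m) (l : Fin n), ∃ c : ℝ,
      Tendsto (fun t => X t k l) atTop (nhds c) := by
    intro k l
    apply cauchySeq_tendsto_of_complete
    refine cauchySeq_of_dist_le_of_summable u (fun t => ?_) hu
    rw [Real.dist_eq, abs_sub_comm]
    exact hbd t k l
  choose Xl hXl using hC
  have hten : Tendsto X atTop (nhds (Matrix.of Xl)) := by
    refine tendsto_pi_nhds.mpr ?_
    intro k
    rw [tendsto_pi_nhds]
    intro l
    exact hXl k l
  refine ⟨Matrix.of Xl, hten, ?_⟩
  have hφc : Continuous φ := by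
    have : LipschitzWith 1 φ := by
      refine LipschitzWith.of_dist_le_mul fun a b => ?_
      simp only [NNReal.coe_one, one_mul, Real.dist_eq]
      exact hφ a b
    exact this.continuous
  have hcont : Continuous fun Y : Matrix (Fin m) (Fin n) ℝ => (W * Y * A + B).map φ := by
    exact Continuous.matrix_map
      (((continuous_const.matrix_mul continuous_id).matrix_mul continuous_const).add
        continuous_const) hφc
  have h1 : Tendsto (fun t => X (t + 1)) atTop (nhds (Matrix.of Xl)) :=
    hten.comp (tendsto_add_atTop_nat 1)
  have h2 : Tendsto (fun t => (W * X t * A + B).map φ) atTop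
      (nhds ((W * Matrix.of Xl * A + B).map φ)) :=
    (hcont.tendsto _).comp hten
  have h3 : (fun t => X (t + 1)) = fun t => (W * X t * A + B).map φ := funext hXs
  rw [h3] at h1
  exact tendsto_nhds_unique h1 h2
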